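/- Let X be a graph on v vertices and let D be a subset of d vertices of X. Then t^{-d} det(W_{D,D}(X, 1/t)) = φ(X\D, t)/φ(X, t), where W(X,t) = Σ_{r≥0} A^r t^r is the walk-generating matrix of X, W_{D,D} denotes its submatrix with rows and columns indexed by D, and φ denotes the characteristic polynomial of the adjacency matrix. -/

import Mathlib

open Matrix Polynomial

lemma my_eval_charpoly {n : Type*} [Fintype n] [DecidableEq n] (M : Matrix n n ℝ) (t : ℝ) :
    eval t M.charpoly = det (t • (1 : Matrix n n ℝ) - M) := by
  rw [Matrix.charpoly, _root_.eval_det, Matrix.matPolyEquiv_charmatrix]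
  congr 1
  simp only [eval_sub, eval_X, eval_C]
  congr 1
  ext i j
  simp [Matrix.scalar_apply, Matrix.smul_apply, Matrix.one_apply, Matrix.diagonal_apply]

lemma jacobi_blocks {α β : Type*} [Fintype α] [Fintype β] [DecidableEq α] [DecidableEq β]
    (M : Matrix (α ⊕ β) (α ⊕ β) ℝ) (hM : M.det ≠ 0) :
    ((M⁻¹).toBlocks₁₁).det * M.det = (M.toBlocks₂₂).det := by
  set N := M⁻¹ with hN
  have hMN : M * N = 1 := Matrix.mul_nonsing_inv M (isUnit_iff_ne_zero.mpr hM)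
  have hMb : M = fromBlocks M.toBlocks₁₁ M.toBlocks₁₂ M.toBlocks₂₁ M.toBlocks₂₂ :=
    (fromBlocks_toBlocks M).symm
  have hNb : N = fromBlocks N.toBlocks₁₁ N.toBlocks₁₂ N.toBlocks₂₁ N.toBlocks₂₂ :=
    (fromBlocks_toBlocks N).symm
  have hMN' : fromBlocks M.toBlocks₁₁ M.toBlocks₁₂ M.toBlocks₂₁ M.toBlocks₂₂ *
      fromBlocks N.toBlocks₁₁ N.toBlocks₁₂ N.toBlocks₂₁ N.toBlocks₂₂
      = fromBlocks 1 0 0 1 := by rw [← hMb, ← hNb, hMN, fromBlocks_one]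
  rw [fromBlocks_multiply] at hMN'
  have h11 : M.toBlocks₁₁ * N.toBlocks₁₁ + M.toBlocks₁₂ * N.toBlocks₂₁ = 1 :=
    congrArg Matrix.toBlocks₁₁ hMN'
  have h21 : M.toBlocks₂₁ * N.toBlocks₁₁ + M.toBlocks₂₂ * N.toBlocks₂₁ = 0 :=
    congrArg Matrix.toBlocks₂₁ hMN'
  have key : M * fromBlocks N.toBlocks₁₁ 0 N.toBlocks₂₁ 1
      = fromBlocks 1 M.toBlocks₁₂ 0 M.toBlocks₂₂ := by
    rw [hMb, fromBlocks_multiply]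
    simp [h11, h21]
  have := congrArg Matrix.det key
  rw [Matrix.det_mul, Matrix.det_fromBlocks_zero₁₂, Matrix.det_fromBlocks_zero₂₁] at this
  simp only [Matrix.det_one, mul_one, one_mul] at this
  linarith [this, mul_comm M.det ((M⁻¹).toBlocks₁₁).det]

theorem walk_generating_det_submatrix {v : ℕ} (X : SimpleGraph (Fin v)) [DecidableRel X.Adj]
    (D : Finset (Fin v)) (t : ℝ) (ht : t ≠ 0)
    (hφ : Polynomial.eval t (X.adjMatrix ℝ).charpoly ≠ 0) :
    t ^ (-(D.card : ℤ)) *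
      Matrix.det
        ((((1 : Matrix (Fin v) (Fin v) ℝ) - t⁻¹ • X.adjMatrix ℝ)⁻¹).submatrix
          (fun x : ↥D => (x : Fin v)) (fun x : ↥D => (x : Fin v)))
    = Polynomial.eval t
        (((X.adjMatrix ℝ).submatrix
            (fun x : ↥(Dᶜ) => (x : Fin v)) (fun x : ↥(Dᶜ) => (x : Fin v))).charpoly)
      / Polynomial.eval t (X.adjMatrix ℝ).charpoly := by
  set A := X.adjMatrix ℝ with hA
  set B := t • (1 : Matrix (Fin v) (Fin v) ℝ) - A with hB
  have hdetB : B.det ≠ 0 := by rw [← my_eval_charpoly]; exact hφ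
  -- (1 - t⁻¹ • A)⁻¹ = t • B⁻¹
  have h1 : (1 : Matrix (Fin v) (Fin v) ℝ) - t⁻¹ • A = t⁻¹ • B := by
    rw [hB, smul_sub, smul_smul, inv_mul_cancel₀ ht, one_smul]
  have hinv : ((1 : Matrix (Fin v) (Fin v) ℝ) - t⁻¹ • A)⁻¹ = t • B⁻¹ := by
    rw [h1]
    apply Matrix.inv_eq_right_inv
    rw [Matrix.smul_mul, Matrix.mul_smul, smul_smul, inv_mul_cancel₀ ht, one_smul,
      Matrix.mul_nonsing_inv B (isUnit_iff_ne_zero.mpr hdetB)]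
  -- the equivalence
  let e : (↥D ⊕ ↥(Dᶜ)) ≃ Fin v :=
    (Equiv.sumCongr (Equiv.refl ↥D)
      (Equiv.subtypeEquivRight (fun x => Finset.mem_compl))).trans
      (Equiv.sumCompl (· ∈ D))
  have he1 : ∀ x : ↥D, e (Sum.inl x) = (x : Fin v) := fun x => rfl
  have he2 : ∀ x : ↥(Dᶜ), e (Sum.inr x) = (x : Fin v) := fun x => rfl
  set M := B.submatrix e e with hM
  have hdetM : M.det ≠ 0 := by rwa [hM, Matrix.det_submatrix_equiv_self]
  have hjac := jacobi_blocks M hdetM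
  have hMinv : M⁻¹ = (B⁻¹).submatrix e e := Matrix.inv_submatrix_equiv B e e
  have hblock11 : (M⁻¹).toBlocks₁₁
      = (B⁻¹).submatrix (fun x : ↥D => (x : Fin v)) (fun x : ↥D => (x : Fin v)) := by
    rw [hMinv]; ext i j; simp [Matrix.toBlocks₁₁, he1]
  have hblock22 : M.toBlocks₂₂
      = B.submatrix (fun x : ↥(Dᶜ) => (x : Fin v)) (fun x : ↥(Dᶜ) => (x : Fin v)) := by
    rw [hM]; ext i j; simp [Matrix.toBlocks₂₂, he2]
  have hsubB : B.submatrix (fun x : ↥(Dᶜ) => (x : Fin v)) (fun x : ↥(Dᶜ) => (x : Fin v))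
      = t • (1 : Matrix ↥(Dᶜ) ↥(Dᶜ) ℝ)
        - A.submatrix (fun x : ↥(Dᶜ) => (x : Fin v)) (fun x : ↥(Dᶜ) => (x : Fin v)) := by
    ext i j
    simp [hB, Matrix.one_apply, Matrix.submatrix_apply, Subtype.val_inj]
  have hdetM' : M.det = B.det := by rw [hM, Matrix.det_submatrix_equiv_self]
  -- rewrite LHS
  have hsm : ((t • B⁻¹).submatrix (fun x : ↥D => (x : Fin v)) (fun x : ↥D => (x : Fin v)))
      = t • ((B⁻¹).submatrix (fun x : ↥D => (x : Fin v)) (fun x : ↥D => (x : Fin v))) := by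
    ext i j; simp
  rw [hinv, hsm, Matrix.det_smul]
  have hcard : Fintype.card ↥D = D.card := Fintype.card_coe D
  rw [hcard]
  have hz : t ^ (-(D.card : ℤ)) * (t ^ D.card *
      ((B⁻¹).submatrix (fun x : ↥D => (x : Fin v)) (fun x : ↥D => (x : Fin v))).det)
      = ((B⁻¹).submatrix (fun x : ↥D => (x : Fin v)) (fun x : ↥D => (x : Fin v))).det := by
    rw [← mul_assoc, _root_.zpow_neg, zpow_natCast, inv_mul_cancel₀ (pow_ne_zero _ ht), one_mul]
  rw [hz]
  rw [hblock11, hdetM'] at hjac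
  rw [my_eval_charpoly, ← hsubB, ← hblock22, ← hjac, my_eval_charpoly, ← hB]
  field_simp
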